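/- Let f : ℝ^m → ℝ be a (possibly nonsmooth) function, S ⊆ ℝ^m nonempty closed convex with diameter-squared Θ = max_{x,y∈S} ‖x−y‖², and suppose there are constants c₁ > 0, c₂ ≥ 0, M > 0 and vectors g^k with ‖g^k‖ ≤ M such that ⟨g^k, x* − x^k⟩ ≤ c₁(f(x*) − f(x^k)) + c₂ μ_k whenever f(x^k) > f(x*), where x* minimizes f over S. If x^{k+1} = Π_S(x^k − α_k g^k) with α_k = (1/M)(k+1)^{-1/2} and μ_k = μ₀(k+1)^{-1/2}, then for k ≥ 2, min_{j≤k} (f(x^j) − f(x*)) ≤ 2(MΘ + (2c₂μ₀ + M) log 3)/(c₁ √(k+2)). -/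

import Mathlib

open scoped RealInnerProductSpace

/-- Telescoping sum over `Icc`. -/
lemma spgr_telescope (u : ℕ → ℝ) :
    ∀ b a : ℕ, a ≤ b → ∑ i ∈ Finset.Icc a b, (u i - u (i + 1)) = u a - u (b + 1) := by
  intro b
  induction b with
  | zero =>
    intro a ha
    interval_cases a
    simp
  | succ n ih =>
    intro a ha
    by_cases h : a ≤ n
    · rw [← Finset.insert_Icc_right_eq_Icc_add_one (by omega), Finset.sum_insert (by simp), ih a h]
      ring
    · have : a = n + 1 := by omega
      subst this
      simp

/-- Squared-distance nonexpansiveness of the metric projection at a point of the set. -/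
lemma spgr_proj_sq_le {m : ℕ} {S : Set (EuclideanSpace ℝ (Fin m))} (hSconv : Convex ℝ S)
    {z v w : EuclideanSpace ℝ (Fin m)} (hv : v ∈ S) (hw : w ∈ S)
    (hmin : ∀ u ∈ S, dist v z ≤ dist u z) : ‖v - w‖ ^ 2 ≤ ‖z - w‖ ^ 2 := by
  haveI : Nonempty S := ⟨⟨v, hv⟩⟩
  have hinf : ‖z - v‖ = ⨅ u : S, ‖z - u‖ := by
    apply le_antisymm
    · exact le_ciInf fun u => by
        simpa [dist_eq_norm, norm_sub_rev] using hmin u u.2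
    · have hbdd : BddBelow (Set.range fun u : S => ‖z - (u : EuclideanSpace ℝ (Fin m))‖) := by
        refine ⟨0, ?_⟩
        rintro r ⟨u, rfl⟩
        exact norm_nonneg _
      exact ciInf_le hbdd ⟨v, hv⟩
  have hvar : ⟪z - v, w - v⟫ ≤ 0 :=
    ((norm_eq_iInf_iff_real_inner_le_zero hSconv hv).mp hinf) w hw
  have hsplit : z - w = (z - v) + (v - w) := by abel
  have hinner : ⟪z - v, v - w⟫ = -⟪z - v, w - v⟫ := by
    rw [show v - w = -(w - v) by abel, inner_neg_right]
  rw [hsplit, norm_add_sq_real, hinner]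
  nlinarith [sq_nonneg ‖z - v‖]

set_option maxHeartbeats 1000000 in
theorem smoothing_projected_gradient_rate {m : ℕ}
    (S : Set (EuclideanSpace ℝ (Fin m))) (hSne : S.Nonempty) (hScl : IsClosed S)
    (hSconv : Convex ℝ S)
    (f : EuclideanSpace ℝ (Fin m) → ℝ)
    (Θ : ℝ) (hΘ : ∀ x ∈ S, ∀ y ∈ S, ‖x - y‖ ^ 2 ≤ Θ)
    (c1 c2 M μ0 : ℝ) (hc1 : 0 < c1) (hc2 : 0 ≤ c2) (hM : 0 < M) (hμ0 : 0 < μ0)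
    (proj : EuclideanSpace ℝ (Fin m) → EuclideanSpace ℝ (Fin m))
    (hproj : ∀ z, proj z ∈ S ∧ ∀ w ∈ S, dist (proj z) z ≤ dist w z)
    (xstar : EuclideanSpace ℝ (Fin m)) (hxstarS : xstar ∈ S)
    (hxstarmin : ∀ x ∈ S, f xstar ≤ f x)
    (x g : ℕ → EuclideanSpace ℝ (Fin m))
    (hx0 : x 0 ∈ S)
    (hgb : ∀ k, ‖g k‖ ≤ M)
    (hineq : ∀ k, f (x k) > f xstar →
      ⟪g k, xstar - x k⟫ ≤ c1 * (f xstar - f (x k)) + c2 * (μ0 / Real.sqrt (k + 1)))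
    (hupdate : ∀ k, x (k + 1) = proj (x k - (1 / (M * Real.sqrt (k + 1))) • g k)) :
    ∀ k : ℕ, 2 ≤ k → ∃ j ≤ k,
      f (x j) - f xstar ≤
        2 * (M * Θ + (2 * c2 * μ0 + M) * Real.log 3) / (c1 * Real.sqrt (k + 2)) := by
  intro k hk
  -- basic positivity facts
  have hΘ0 : (0 : ℝ) ≤ Θ := by
    have := hΘ xstar hxstarS xstar hxstarS
    simpa using this
  have hlog1 : (1 : ℝ) ≤ Real.log 3 := by
    rw [Real.le_log_iff_exp_le (by norm_num)]
    calc Real.exp 1 ≤ 2.7182818286 := Real.exp_one_lt_d9.le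
      _ ≤ 3 := by norm_num
  have hlog0 : (0 : ℝ) ≤ Real.log 3 := le_trans zero_le_one hlog1
  set N : ℝ := M * Θ + (2 * c2 * μ0 + M) * Real.log 3 with hN_def
  have hN0 : 0 ≤ N := by positivity
  have hsk2 : (0:ℝ) < Real.sqrt (k + 2) := Real.sqrt_pos.mpr (by positivity)
  have hxS : ∀ i, x i ∈ S := by
    intro i
    cases i with
    | zero => exact hx0
    | succ n => rw [hupdate n]; exact (hproj _).1
  set a : ℕ → ℝ := fun i => ‖x i - xstar‖ ^ 2 with ha_def
  -- key per-iteration inequality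
  have key : ∀ i : ℕ, f xstar < f (x i) →
      2 * c1 / Real.sqrt (i + 1) * (f (x i) - f xstar) ≤
        M * (a i - a (i + 1)) + (2 * c2 * μ0 + M) / ((i : ℝ) + 1) := by
    intro i hfi
    set s := Real.sqrt ((i : ℝ) + 1) with hs_def
    have hi1 : (0:ℝ) < (i : ℝ) + 1 := by positivity
    have hs0 : 0 < s := Real.sqrt_pos.mpr hi1
    have hsne : s ≠ 0 := ne_of_gt hs0
    have hMne : M ≠ 0 := ne_of_gt hM
    have hss : s * s = (i : ℝ) + 1 := Real.mul_self_sqrt hi1.le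
    set α : ℝ := 1 / (M * s) with hα_def
    have hα0 : 0 < α := by rw [hα_def]; positivity
    set z := x i - α • g i with hz_def
    have hz' : x (i + 1) = proj z := by
      rw [hupdate i, hz_def, hα_def, hs_def]
    have hnonexp : a (i + 1) ≤ ‖z - xstar‖ ^ 2 := by
      have h := spgr_proj_sq_le hSconv (hproj z).1 hxstarS (hproj z).2
      show ‖x (i + 1) - xstar‖ ^ 2 ≤ ‖z - xstar‖ ^ 2
      rw [hz']
      exact h
    have hexp : ‖z - xstar‖ ^ 2 =
        a i + 2 * α * ⟪g i, xstar - x i⟫ + α ^ 2 * ‖g i‖ ^ 2 := by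
      have h1 : z - xstar = (x i - xstar) - α • g i := by rw [hz_def]; abel
      rw [h1, norm_sub_sq_real, real_inner_smul_right, norm_smul, Real.norm_eq_abs,
        abs_of_pos hα0, mul_pow, real_inner_comm]
      have h2 : ⟪g i, x i - xstar⟫ = -⟪g i, xstar - x i⟫ := by
        rw [show x i - xstar = -(xstar - x i) by abel, inner_neg_right]
      rw [h2]
      show _ = ‖x i - xstar‖ ^ 2 + _ + _
      ring
    have hgi2 : ‖g i‖ ^ 2 ≤ M ^ 2 := by nlinarith [hgb i, norm_nonneg (g i)]
    have hiq := hineq i hfi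
    rw [← hs_def] at hiq
    have hcomb : a (i + 1) ≤
        a i + 2 * α * (c1 * (f xstar - f (x i)) + c2 * (μ0 / s)) + α ^ 2 * M ^ 2 := by
      rw [hexp] at hnonexp
      have t1 := mul_le_mul_of_nonneg_left hiq (by positivity : (0:ℝ) ≤ 2 * α)
      have t2 := mul_le_mul_of_nonneg_left hgi2 (by positivity : (0:ℝ) ≤ α ^ 2)
      linarith
    rw [← hss]
    rw [hα_def] at hcomb
    have hmul := mul_le_mul_of_nonneg_left hcomb hM.le
    have expand : M * (a i + 2 * (1 / (M * s)) * (c1 * (f xstar - f (x i)) + c2 * (μ0 / s)) +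
        (1 / (M * s)) ^ 2 * M ^ 2) =
        M * a i - 2 * c1 / s * (f (x i) - f xstar) + 2 * c2 * μ0 / (s * s) + M / (s * s) := by
      field_simp
      ring
    rw [expand] at hmul
    have hsplitC : (2 * c2 * μ0 + M) / (s * s) = 2 * c2 * μ0 / (s * s) + M / (s * s) :=
      add_div _ _ _
    have hMsub : M * (a i - a (i + 1)) = M * a i - M * a (i + 1) := by ring
    rw [hsplitC, hMsub]
    linarith
  -- index set
  set a0 : ℕ := (k + 1) / 2 with ha0_def
  have ha0k : a0 ≤ k := by omega
  set T : Finset ℕ := Finset.Icc a0 k with hT_def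
  have hTne : T.Nonempty := ⟨a0, Finset.mem_Icc.mpr ⟨le_refl _, ha0k⟩⟩
  have hTcard : T.card = k + 1 - a0 := Nat.card_Icc a0 k
  by_cases hpos : ∀ j ∈ T, f xstar < f (x j)
  · -- all values in the window are strictly above the optimum
    obtain ⟨j0, hj0T, hj0min⟩ := T.exists_min_image (fun j => f (x j) - f xstar) hTne
    have hj0k : j0 ≤ k := (Finset.mem_Icc.mp hj0T).2
    have hΔpos : 0 < f (x j0) - f xstar := sub_pos.mpr (hpos j0 hj0T)
    set Δ : ℝ := f (x j0) - f xstar with hΔ_def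
    refine ⟨j0, hj0k, ?_⟩
    have hsk1 : (0:ℝ) < Real.sqrt (k + 1) := Real.sqrt_pos.mpr (by positivity)
    have hsk1ne : Real.sqrt ((k:ℝ) + 1) ≠ 0 := ne_of_gt hsk1
    -- lower bound on the sum
    have hlow : (T.card : ℝ) * (2 * c1 / Real.sqrt (k + 1) * Δ) ≤
        ∑ i ∈ T, 2 * c1 / Real.sqrt (i + 1) * (f (x i) - f xstar) := by
      have h := Finset.card_nsmul_le_sum T
        (fun i => 2 * c1 / Real.sqrt (i + 1) * (f (x i) - f xstar))
        (2 * c1 / Real.sqrt (k + 1) * Δ) ?_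
      · simpa [nsmul_eq_mul] using h
      · intro i hi
        have hik : i ≤ k := (Finset.mem_Icc.mp hi).2
        have hikR : (i : ℝ) ≤ (k : ℝ) := by exact_mod_cast hik
        have h1 : 2 * c1 / Real.sqrt (k + 1) ≤ 2 * c1 / Real.sqrt (i + 1) := by
          gcongr
        have h2 : Δ ≤ f (x i) - f xstar := hj0min i hi
        have h3 : (0:ℝ) ≤ 2 * c1 / Real.sqrt (i + 1) := by positivity
        calc 2 * c1 / Real.sqrt (k + 1) * Δ ≤ 2 * c1 / Real.sqrt (i + 1) * Δ :=
              mul_le_mul_of_nonneg_right h1 hΔpos.le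
          _ ≤ 2 * c1 / Real.sqrt (i + 1) * (f (x i) - f xstar) :=
              mul_le_mul_of_nonneg_left h2 h3
    -- upper bound on the sum
    have hup : ∑ i ∈ T, 2 * c1 / Real.sqrt (i + 1) * (f (x i) - f xstar) ≤ N := by
      have step1 : ∑ i ∈ T, 2 * c1 / Real.sqrt (i + 1) * (f (x i) - f xstar) ≤
          ∑ i ∈ T, (M * (a i - a (i + 1)) + (2 * c2 * μ0 + M) / ((i : ℝ) + 1)) :=
        Finset.sum_le_sum fun i hi => key i (hpos i hi)
      have step2 : ∑ i ∈ T, (M * (a i - a (i + 1)) + (2 * c2 * μ0 + M) / ((i : ℝ) + 1)) =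
          M * (a a0 - a (k + 1)) + (2 * c2 * μ0 + M) * ∑ i ∈ T, 1 / ((i : ℝ) + 1) := by
        rw [Finset.sum_add_distrib, ← Finset.mul_sum, spgr_telescope a k a0 ha0k,
          Finset.mul_sum]
        congr 1
        refine Finset.sum_congr rfl fun i _ => ?_
        rw [mul_one_div]
      have hsum1 : ∑ i ∈ T, 1 / ((i : ℝ) + 1) ≤ 1 := by
        have hbd : ∀ i ∈ T, (1:ℝ) / ((i : ℝ) + 1) ≤ 1 / ((a0 : ℝ) + 1) := by
          intro i hi
          have h0 : a0 ≤ i := (Finset.mem_Icc.mp hi).1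
          have h0R : (a0 : ℝ) ≤ (i : ℝ) := by exact_mod_cast h0
          gcongr
        have h := Finset.sum_le_card_nsmul T _ _ hbd
        rw [hTcard, nsmul_eq_mul] at h
        have hcast : ((k + 1 - a0 : ℕ) : ℝ) ≤ (a0 : ℝ) + 1 := by
          have h1 : k + 1 - a0 ≤ a0 + 1 := by omega
          exact_mod_cast h1
        calc ∑ i ∈ T, 1 / ((i : ℝ) + 1)
            ≤ ((k + 1 - a0 : ℕ) : ℝ) * (1 / ((a0 : ℝ) + 1)) := h
          _ ≤ ((a0 : ℝ) + 1) * (1 / ((a0 : ℝ) + 1)) :=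
              mul_le_mul_of_nonneg_right hcast (by positivity)
          _ = 1 := by field_simp
      have haa0 : a a0 ≤ Θ := hΘ (x a0) (hxS a0) xstar hxstarS
      have hak1 : 0 ≤ a (k + 1) := sq_nonneg _
      have hC0 : (0:ℝ) ≤ 2 * c2 * μ0 + M := by positivity
      calc ∑ i ∈ T, 2 * c1 / Real.sqrt (i + 1) * (f (x i) - f xstar)
          ≤ M * (a a0 - a (k + 1)) + (2 * c2 * μ0 + M) * ∑ i ∈ T, 1 / ((i : ℝ) + 1) := by
            rw [← step2]; exact step1
        _ ≤ M * Θ + (2 * c2 * μ0 + M) * Real.log 3 := by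
            have h1 : M * (a a0 - a (k + 1)) ≤ M * Θ :=
              mul_le_mul_of_nonneg_left (by linarith) hM.le
            have h2 : (2 * c2 * μ0 + M) * ∑ i ∈ T, 1 / ((i : ℝ) + 1) ≤
                (2 * c2 * μ0 + M) * Real.log 3 :=
              mul_le_mul_of_nonneg_left (le_trans hsum1 hlog1) hC0
            linarith
        _ = N := rfl
    -- combine
    have hcount : ((k : ℝ) + 1) / 2 ≤ (T.card : ℝ) := by
      rw [hTcard]
      have h1 : k + 1 ≤ 2 * (k + 1 - a0) := by omega
      have h2 : ((k:ℝ) + 1) ≤ 2 * ((k + 1 - a0 : ℕ) : ℝ) := by exact_mod_cast h1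
      linarith
    have H1 : (T.card : ℝ) * (2 * c1 / Real.sqrt (k + 1) * Δ) ≤ N := le_trans hlow hup
    have hssk2 : Real.sqrt ((k:ℝ) + 2) * Real.sqrt ((k:ℝ) + 2) = (k : ℝ) + 2 :=
      Real.mul_self_sqrt (by positivity)
    have hk12 : Real.sqrt ((k:ℝ) + 1) ≤ Real.sqrt ((k:ℝ) + 2) := Real.sqrt_le_sqrt (by linarith)
    have H2 : 2 * c1 * (T.card : ℝ) * Δ ≤ N * Real.sqrt ((k:ℝ) + 1) := by
      have h := mul_le_mul_of_nonneg_right H1 hsk1.le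
      have heq : (T.card : ℝ) * (2 * c1 / Real.sqrt ((k:ℝ) + 1) * Δ) * Real.sqrt ((k:ℝ) + 1) =
          2 * c1 * (T.card : ℝ) * Δ := by
        field_simp
      rw [heq] at h
      exact h
    have H3 : N * Real.sqrt ((k:ℝ) + 1) ≤ N * Real.sqrt ((k:ℝ) + 2) :=
      mul_le_mul_of_nonneg_left hk12 hN0
    have H4 : Δ * (c1 * Real.sqrt ((k:ℝ) + 2)) * Real.sqrt ((k:ℝ) + 2) ≤
        2 * N * Real.sqrt ((k:ℝ) + 2) := by
      have hA : Δ * (c1 * Real.sqrt ((k:ℝ) + 2)) * Real.sqrt ((k:ℝ) + 2) =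
          Δ * c1 * ((k : ℝ) + 2) := by
        rw [mul_assoc, mul_assoc, mul_comm (Real.sqrt ((k:ℝ)+2)), mul_assoc, hssk2]
      rw [hA]
      have hB : Δ * c1 * ((k : ℝ) + 2) ≤ Δ * c1 * (2 * ((k:ℝ) + 1)) := by
        apply mul_le_mul_of_nonneg_left _ (by positivity)
        have : (2:ℝ) ≤ (k:ℝ) := by exact_mod_cast hk
        linarith
      have hC : Δ * c1 * (2 * ((k:ℝ) + 1)) ≤ 2 * (2 * c1 * (T.card : ℝ) * Δ) := by
        have hh := mul_le_mul_of_nonneg_left hcount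
          (by positivity : (0:ℝ) ≤ Δ * c1)
        nlinarith [hh]
      calc Δ * c1 * ((k : ℝ) + 2) ≤ Δ * c1 * (2 * ((k:ℝ) + 1)) := hB
        _ ≤ 2 * (2 * c1 * (T.card : ℝ) * Δ) := hC
        _ ≤ 2 * (N * Real.sqrt ((k:ℝ) + 2)) := by linarith
        _ = 2 * N * Real.sqrt ((k:ℝ) + 2) := by ring
    have H5 : Δ * (c1 * Real.sqrt ((k:ℝ) + 2)) ≤ 2 * N :=
      (mul_le_mul_iff_of_pos_right hsk2).mp H4
    rw [← hΔ_def, le_div_iff₀ (by positivity)]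
    linarith
  · -- some point in the window already achieves the optimum
    push_neg at hpos
    obtain ⟨j, hjT, hjle⟩ := hpos
    refine ⟨j, (Finset.mem_Icc.mp hjT).2, ?_⟩
    have h1 : f (x j) - f xstar ≤ 0 := by linarith
    have h2 : (0:ℝ) ≤ 2 * N / (c1 * Real.sqrt (k + 2)) := by positivity
    exact le_trans h1 h2
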